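/- For any real numbers μ₁, …, μ_r, the divided difference function [μ₁, …, μ_r](t) satisfies, for all t > 0, the derivative bound |[μ₁, …, μ_r]'(t)| ≤ (r−1) t^{r−2}/(r−1)! + (|μ_r − μ_{r−1}| + ⋯ + |μ₂ − μ₁| + |μ₁|) t^{r−1}/(r−1)!. -/

import Mathlib

open MeasureTheory Complex

noncomputable section

/-- The iterated integral `∫₀ᵘ e^{itd₁s₁} ∫₀^{s₁} e^{itd₂s₂} ⋯ ds₂ ds₁` appearing in the
divided differences of exponentials (Hermite–Genocchi formula). -/
def nestInt (t : ℝ) : List ℝ → ℝ → ℂ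
  | [], _ => 1
  | d :: ds, u => ∫ s in (0:ℝ)..u, Complex.exp (Complex.I * t * d * s) * nestInt t ds s

/-- Consecutive differences `[μ₂ - μ₁, μ₃ - μ₂, …]` of a list `[μ₁, μ₂, …]`. -/
def consecDiffs : List ℝ → List ℝ
  | [] => []
  | [_] => []
  | x :: y :: rest => (y - x) :: consecDiffs (y :: rest)

/-- The divided difference
`[μ₁,…,μ_r](t) = (it)^{r-1} ∫₀¹∫₀^{s₁}⋯∫₀^{s_{r-2}}
  exp(i[s_{r-1}(μ_r - μ_{r-1}) + ⋯ + s₁(μ₂ - μ₁) + μ₁]t) ds_{r-1}⋯ds₁`,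
here defined via the equivalent iterated-integral (nested) form. -/
def divDiff (t : ℝ) : List ℝ → ℂ
  | [] => 0
  | m :: rest => (Complex.I * t) ^ rest.length * Complex.exp (Complex.I * m * t) *
      nestInt t (consecDiffs (m :: rest)) 1

/-- derivative in `t` of `nestInt t ds u`. -/
def Dnest (t : ℝ) : List ℝ → ℝ → ℂ
  | [], _ => 0
  | d :: ds, u => ∫ s in (0:ℝ)..u,
      (Complex.exp (Complex.I * t * d * s) * (Complex.I * d * s) * nestInt t ds s
        + Complex.exp (Complex.I * t * d * s) * Dnest t ds s)

lemma cont_nest (ds : List ℝ) : Continuous (fun p : ℝ × ℝ => nestInt p.1 ds p.2) := by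
  induction ds with
  | nil => simpa [nestInt] using continuous_const
  | cons d ds ih =>
    have hF : Continuous (Function.uncurry fun (p : ℝ × ℝ) (s : ℝ) =>
        Complex.exp (Complex.I * p.1 * d * s) * nestInt p.1 ds s) := by
      apply Continuous.mul
      · exact Complex.continuous_exp.comp (by fun_prop)
      · exact ih.comp (Continuous.prodMk continuous_fst.fst continuous_snd)
    simpa [nestInt] using
      intervalIntegral.continuous_parametric_intervalIntegral_of_continuous (a₀ := (0:ℝ))
        (μ := volume) hF continuous_snd

lemma cont_Dnest (ds : List ℝ) : Continuous (fun p : ℝ × ℝ => Dnest p.1 ds p.2) := by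
  induction ds with
  | nil => simpa [Dnest] using continuous_const
  | cons d ds ih =>
    have hF : Continuous (Function.uncurry fun (p : ℝ × ℝ) (s : ℝ) =>
        Complex.exp (Complex.I * p.1 * d * s) * (Complex.I * d * s) * nestInt p.1 ds s
          + Complex.exp (Complex.I * p.1 * d * s) * Dnest p.1 ds s) := by
      apply Continuous.add
      · exact (((Complex.continuous_exp.comp (by fun_prop)).mul (by fun_prop)).mul
          ((cont_nest ds).comp (Continuous.prodMk continuous_fst.fst continuous_snd)))
      · exact (Complex.continuous_exp.comp (by fun_prop)).mul (ih.comp (Continuous.prodMk continuous_fst.fst continuous_snd))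
    simpa [Dnest] using
      intervalIntegral.continuous_parametric_intervalIntegral_of_continuous (a₀ := (0:ℝ))
        (μ := volume) hF continuous_snd

lemma abs_exp_I_mul (t d s : ℝ) : ‖Complex.exp (Complex.I * t * d * s)‖ = 1 := by
  rw [Complex.norm_exp]; simp [Complex.mul_re]

lemma nest_abs_le (ds : List ℝ) (t : ℝ) : ∀ {u : ℝ}, 0 ≤ u →
    ‖nestInt t ds u‖ ≤ u ^ ds.length / ds.length.factorial := by
  induction ds with
  | nil => intro u hu; simp [nestInt]
  | cons d ds ih =>
    intro u hu
    set n := ds.length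
    have hbound : IntervalIntegrable (fun s : ℝ => s ^ n / n.factorial) volume 0 u :=
      Continuous.intervalIntegrable (by fun_prop) _ _
    have h : ∀ᵐ (s : ℝ) ∂volume.restrict (Set.uIoc (0:ℝ) u),
        ‖Complex.exp (Complex.I * t * d * s) * nestInt t ds s‖ ≤ s ^ n / n.factorial := by
      filter_upwards [MeasureTheory.ae_restrict_mem measurableSet_uIoc] with s hs
      rw [Set.uIoc_of_le hu] at hs
      rw [norm_mul, abs_exp_I_mul, one_mul]
      exact ih hs.1.le
    have key := intervalIntegral.norm_integral_le_abs_of_norm_le h hbound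
    rw [intervalIntegral.integral_div, integral_pow] at key
    have : |(u ^ (n + 1) - 0 ^ (n + 1)) / (↑n + 1) / ↑n.factorial|
        = u ^ (n + 1) / (n + 1).factorial := by
      rw [zero_pow (by omega : n + 1 ≠ 0), sub_zero,
        _root_.abs_of_nonneg (by positivity), Nat.factorial_succ]
      push_cast
      rw [div_div]
    rw [this] at key
    simpa [nestInt, List.length_cons] using key

lemma Dnest_abs_le (ds : List ℝ) (t : ℝ) : ∀ {u : ℝ}, 0 ≤ u →
    ‖Dnest t ds u‖ ≤
      (ds.map (fun x => |x|)).sum * u ^ (ds.length + 1) / ds.length.factorial := by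
  induction ds with
  | nil => intro u hu; simp [Dnest]
  | cons d ds ih =>
    intro u hu
    set n := ds.length with hn
    set S := (ds.map (fun x => |x|)).sum with hS
    have hS0 : 0 ≤ S := by
      rw [hS]; apply List.sum_nonneg; intro x hx
      simp only [List.mem_map] at hx; obtain ⟨y, _, rfl⟩ := hx; exact abs_nonneg y
    have hbound : IntervalIntegrable (fun s : ℝ => (|d| + S) * s ^ (n+1) / n.factorial)
        volume 0 u := Continuous.intervalIntegrable (by fun_prop) _ _
    have h : ∀ᵐ (s : ℝ) ∂volume.restrict (Set.uIoc (0:ℝ) u),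
        ‖Complex.exp (Complex.I * t * d * s) * (Complex.I * d * s) * nestInt t ds s
          + Complex.exp (Complex.I * t * d * s) * Dnest t ds s‖
          ≤ (|d| + S) * s ^ (n+1) / n.factorial := by
      filter_upwards [MeasureTheory.ae_restrict_mem measurableSet_uIoc] with s hs
      rw [Set.uIoc_of_le hu] at hs
      have hs0 : 0 ≤ s := hs.1.le
      have h1 : ‖Complex.exp (Complex.I * t * d * s) * (Complex.I * d * s) * nestInt t ds s‖
          ≤ |d| * s ^ (n+1) / n.factorial := by
        rw [norm_mul, norm_mul,
          abs_exp_I_mul, one_mul]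
        have h2 : ‖Complex.I * d * s‖ = |d| * s := by
          rw [norm_mul, norm_mul, Complex.norm_I, one_mul, Complex.norm_real, Complex.norm_real,
              Real.norm_eq_abs, Real.norm_eq_abs,
            _root_.abs_of_nonneg hs0]
        rw [h2]
        calc |d| * s * ‖nestInt t ds s‖ ≤ |d| * s * (s ^ n / n.factorial) := by
              gcongr; exact nest_abs_le ds t hs0
          _ = |d| * s ^ (n+1) / n.factorial := by ring
      have h3 : ‖Complex.exp (Complex.I * t * d * s) * Dnest t ds s‖
          ≤ S * s ^ (n+1) / n.factorial := by
        rw [norm_mul, abs_exp_I_mul, one_mul]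
        exact ih hs0
      calc ‖_ + _‖ ≤ _ := norm_add_le _ _
        _ ≤ |d| * s ^ (n+1) / n.factorial + S * s ^ (n+1) / n.factorial := add_le_add h1 h3
        _ = (|d| + S) * s ^ (n+1) / n.factorial := by ring
    have key := intervalIntegral.norm_integral_le_abs_of_norm_le h hbound
    have heq : (∫ s in (0:ℝ)..u, (|d| + S) * s ^ (n+1) / n.factorial)
        = (|d| + S) * u ^ (n+2) / ((n+2) * n.factorial) := by
      simp_rw [mul_div_assoc]
      rw [intervalIntegral.integral_const_mul, intervalIntegral.integral_div, integral_pow]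
      have h1 : ((n:ℝ)+2) ≠ 0 := by positivity
      have h2 : (n.factorial:ℝ) ≠ 0 := by exact_mod_cast Nat.factorial_ne_zero n
      push_cast
      field_simp
      ring_nf
    rw [heq, _root_.abs_of_nonneg (by positivity)] at key
    have key2 : ‖Dnest t (d :: ds) u‖
        ≤ (|d| + S) * u ^ (n+2) / (((n:ℝ)+2) * n.factorial) := by
      simpa [Dnest] using key
    refine key2.trans ?_
    have hlen : (d :: ds).length = n + 1 := by simp [hn]
    rw [List.map_cons, List.sum_cons, hlen, Nat.factorial_succ]
    push_cast
    rw [div_le_div_iff₀ (by positivity) (by positivity)]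
    have hfac : (0:ℝ) < n.factorial := by exact_mod_cast Nat.factorial_pos n
    have hA : (0:ℝ) ≤ (|d| + S) * u ^ (n+2) := by positivity
    have hexp : u ^ (n + 1 + 1) = u ^ (n + 2) := rfl
    rw [hexp]
    nlinarith [hA, hfac]

lemma nest_hasDerivAt : ∀ (ds : List ℝ) (t : ℝ) {u : ℝ}, 0 ≤ u →
    HasDerivAt (fun τ : ℝ => nestInt τ ds u) (Dnest t ds u) t := by
  intro ds
  induction ds with
  | nil => intro t u hu; simpa [nestInt, Dnest] using hasDerivAt_const t (1:ℂ)
  | cons d ds ih =>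
    intro t u hu
    set n := ds.length with hn
    set S := (ds.map (fun x => |x|)).sum with hS
    have hS0 : 0 ≤ S := by
      rw [hS]; apply List.sum_nonneg; intro x hx
      simp only [List.mem_map] at hx; obtain ⟨y, _, rfl⟩ := hx; exact abs_nonneg y
    have hcont : ∀ τ : ℝ, Continuous fun s : ℝ =>
        Complex.exp (Complex.I * τ * d * s) * nestInt τ ds s := by
      intro τ
      exact (Complex.continuous_exp.comp (by fun_prop)).mul
        ((cont_nest ds).comp (Continuous.prodMk continuous_const continuous_id))
    have main := intervalIntegral.hasDerivAt_integral_of_dominated_loc_of_deriv_le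
      (F := fun (τ : ℝ) (s : ℝ) => Complex.exp (Complex.I * τ * d * s) * nestInt τ ds s)
      (F' := fun (τ : ℝ) (s : ℝ) =>
        Complex.exp (Complex.I * τ * d * s) * (Complex.I * d * s) * nestInt τ ds s
          + Complex.exp (Complex.I * τ * d * s) * Dnest τ ds s)
      (x₀ := t) (a := 0) (b := u) (μ := volume)
      (bound := fun s => (|d| + S) * s ^ (n+1) / n.factorial)
      Filter.univ_mem
      (Filter.Eventually.of_forall fun τ => ((hcont τ).aestronglyMeasurable))
      ((hcont t).intervalIntegrable _ _)
      (Continuous.aestronglyMeasurable (by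
        apply Continuous.add
        · exact ((Complex.continuous_exp.comp (by fun_prop)).mul (by fun_prop)).mul
            ((cont_nest ds).comp (Continuous.prodMk continuous_const continuous_id))
        · exact (Complex.continuous_exp.comp (by fun_prop)).mul
            ((cont_Dnest ds).comp (Continuous.prodMk continuous_const continuous_id))))
      (Filter.Eventually.of_forall (by
        intro s hs τ hτ
        rw [Set.uIoc_of_le hu] at hs
        have hs0 : 0 ≤ s := hs.1.le
        have h1 : ‖Complex.exp (Complex.I * τ * d * s) * (Complex.I * d * s) * nestInt τ ds s‖
            ≤ |d| * s ^ (n+1) / n.factorial := by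
          rw [norm_mul, norm_mul,
            abs_exp_I_mul, one_mul]
          have h2 : ‖Complex.I * d * s‖ = |d| * s := by
            rw [norm_mul, norm_mul, Complex.norm_I, one_mul, Complex.norm_real, Complex.norm_real,
              Real.norm_eq_abs, Real.norm_eq_abs,
              _root_.abs_of_nonneg hs0]
          rw [h2]
          calc |d| * s * ‖nestInt τ ds s‖ ≤ |d| * s * (s ^ n / n.factorial) := by
                gcongr; exact nest_abs_le ds τ hs0
            _ = |d| * s ^ (n+1) / n.factorial := by ring
        have h3 : ‖Complex.exp (Complex.I * τ * d * s) * Dnest τ ds s‖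
            ≤ S * s ^ (n+1) / n.factorial := by
          rw [norm_mul, abs_exp_I_mul, one_mul]
          exact Dnest_abs_le ds τ hs0
        calc ‖_ + _‖ ≤ _ := norm_add_le _ _
          _ ≤ |d| * s ^ (n+1) / n.factorial + S * s ^ (n+1) / n.factorial := add_le_add h1 h3
          _ = (|d| + S) * s ^ (n+1) / n.factorial := by ring))
      (Continuous.intervalIntegrable (by fun_prop) _ _)
      (Filter.Eventually.of_forall (by
        intro s hs τ _
        rw [Set.uIoc_of_le hu] at hs
        have hs0 : 0 ≤ s := hs.1.le
        have h1 : HasDerivAt (fun y : ℝ => Complex.exp (Complex.I * y * d * s))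
            (Complex.exp (Complex.I * τ * d * s) * (Complex.I * d * s)) τ := by
          have hz : HasDerivAt (fun z : ℂ => Complex.exp (Complex.I * z * d * s))
              (Complex.exp (Complex.I * τ * d * s) * (Complex.I * 1 * d * s)) (τ:ℂ) :=
            ((((hasDerivAt_id (τ:ℂ)).const_mul Complex.I).mul_const (d:ℂ)).mul_const (s:ℂ)).cexp
          simpa using hz.comp_ofReal
        exact h1.mul (ih τ hs0)))
    have h2 := main.2
    simpa [nestInt, Dnest] using h2

lemma consecDiffs_cons (x : ℝ) (l : List ℝ) (hl : l ≠ []) :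
    consecDiffs (x :: l) = (l.headI - x) :: consecDiffs l := by
  cases l with
  | nil => exact absurd rfl hl
  | cons y rest => rfl

lemma consecDiffs_map_range : ∀ (n : ℕ) (μ : ℕ → ℝ),
    consecDiffs ((List.range (n+1)).map μ) = (List.range n).map (fun i => μ (i+1) - μ i) := by
  intro n
  induction n with
  | zero => intro μ; simp [consecDiffs]
  | succ n ih =>
    intro μ
    have h1 : (List.range (n+2)).map μ = μ 0 :: (List.range (n+1)).map (fun i => μ (i+1)) := by
      rw [show n+2 = n+1+1 from rfl, List.range_succ_eq_map]
      simp [Function.comp_def]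
    have h2 : ((List.range (n+1)).map (fun i => μ (i+1))).headI = μ 1 := by
      rw [List.range_succ_eq_map]; simp
    rw [h1, consecDiffs_cons _ _ (by simp), h2, ih (fun i => μ (i+1))]
    conv_rhs => rw [List.range_succ_eq_map]
    simp [Function.comp_def]

lemma sum_map_range (g : ℕ → ℝ) (n : ℕ) :
    ((List.range n).map g).sum = ∑ i ∈ Finset.range n, g i := by
  induction n with
  | zero => simp
  | succ n ih =>
    rw [List.range_succ, Finset.sum_range_succ, List.map_append, List.sum_append, ih]; simp

/-- Derivative bound for divided differences: for `t > 0`,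
`|[μ₁,…,μ_r]'(t)| ≤ (r-1)t^{r-2}/(r-1)! + (|μ_r - μ_{r-1}| + ⋯ + |μ₂ - μ₁| + |μ₁|) t^{r-1}/(r-1)!`
(here `μ i` denotes `μ_{i+1}`, `i = 0,…,r-1`). -/
theorem stmt15 (r : ℕ) (hr : 1 ≤ r) (μ : ℕ → ℝ) (t : ℝ) (ht : 0 < t) :
    ‖deriv (fun s : ℝ => divDiff s ((List.range r).map μ)) t‖ ≤
      ((r - 1 : ℕ) : ℝ) * t ^ (r - 2) / (Nat.factorial (r - 1)) +
        ((∑ i ∈ Finset.range (r - 1), |μ (i + 1) - μ i|) + |μ 0|) *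
          t ^ (r - 1) / (Nat.factorial (r - 1)) := by
  obtain ⟨n, rfl⟩ : ∃ n, r = n + 1 := ⟨r - 1, (Nat.succ_pred_eq_of_pos hr).symm⟩
  set ds := consecDiffs ((List.range (n+1)).map μ) with hds
  have hds' : ds = (List.range n).map (fun i => μ (i+1) - μ i) := consecDiffs_map_range n μ
  have hdslen : ds.length = n := by rw [hds']; simp
  set S := (ds.map (fun x => |x|)).sum with hS
  have hSS : S = ∑ i ∈ Finset.range n, |μ (i+1) - μ i| := by
    rw [hS, hds', List.map_map, ← sum_map_range]
    rfl
  have hS0 : 0 ≤ S := by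
    rw [hSS]; positivity
  have hL : (List.range (n+1)).map μ = μ 0 :: (List.range n).map (fun i => μ (i+1)) := by
    rw [List.range_succ_eq_map]
    simp [Function.comp_def]
  have hfun : (fun s : ℝ => divDiff s ((List.range (n+1)).map μ))
      = fun s : ℝ => (Complex.I * (s:ℂ)) ^ n * Complex.exp (Complex.I * (μ 0 : ℝ) * (s:ℂ)) *
          nestInt s ds 1 := by
    funext s
    rw [hL]
    simp only [divDiff, List.length_map, List.length_range]
    rw [← hL, ← hds]
  have hpow : HasDerivAt (fun s : ℝ => (Complex.I * (s:ℂ)) ^ n)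
      ((n:ℂ) * (Complex.I * (t:ℂ)) ^ (n-1) * (Complex.I * 1)) t :=
    (((hasDerivAt_id (t:ℂ)).const_mul Complex.I).pow n).comp_ofReal
  have hexp : HasDerivAt (fun s : ℝ => Complex.exp (Complex.I * (μ 0 : ℝ) * (s:ℂ)))
      (Complex.exp (Complex.I * (μ 0:ℝ) * (t:ℂ)) * (Complex.I * (μ 0:ℝ) * 1)) t :=
    (((hasDerivAt_id (t:ℂ)).const_mul (Complex.I * (μ 0:ℝ))).cexp).comp_ofReal
  have hN := nest_hasDerivAt ds t (zero_le_one)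
  have total := (hpow.mul hexp).mul hN
  rw [hfun, (by exact total.deriv : deriv (fun s : ℝ => (Complex.I * (s:ℂ)) ^ n *
    Complex.exp (Complex.I * (μ 0 : ℝ) * (s:ℂ)) * nestInt s ds 1) t = _)]
  simp only [Pi.mul_apply]
  -- abbreviations
  set A := (n:ℂ) * (Complex.I * (t:ℂ)) ^ (n-1) * (Complex.I * 1) with hA
  set P := (Complex.I * (t:ℂ)) ^ n with hP
  set e := Complex.exp (Complex.I * (μ 0:ℝ) * (t:ℂ)) with he
  set e' := e * (Complex.I * (μ 0:ℝ) * 1) with he'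
  set N := nestInt t ds 1 with hNdef
  set N' := Dnest t ds 1 with hN'def
  have habsI : ‖Complex.I * (t:ℂ)‖ = t := by
    rw [norm_mul, Complex.norm_I, one_mul, Complex.norm_real, Real.norm_eq_abs, _root_.abs_of_nonneg ht.le]
  have habse : ‖e‖ = 1 := by
    rw [he, Complex.norm_exp]; simp [Complex.mul_re]
  have habsA : ‖A‖ = n * t ^ (n-1) := by
    rw [hA, norm_mul, norm_mul, norm_pow, habsI, Complex.norm_natCast]
    simp
  have habsP : ‖P‖ = t ^ n := by rw [hP, norm_pow, habsI]
  have habse' : ‖e'‖ = |μ 0| := by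
    rw [he', norm_mul, habse, one_mul, norm_mul, norm_mul, Complex.norm_I, Complex.norm_real]
    simp
  have hNb : ‖N‖ ≤ 1 / (n.factorial : ℝ) := by
    have := nest_abs_le ds t (zero_le_one)
    rwa [hdslen, one_pow] at this
  have hN'b : ‖N'‖ ≤ S / (n.factorial : ℝ) := by
    have := Dnest_abs_le ds t (zero_le_one)
    rwa [hdslen, one_pow, mul_one, ← hS] at this
  have hfac : (0:ℝ) < n.factorial := by exact_mod_cast Nat.factorial_pos n
  have key : ‖(A * e + P * e') * N + P * e * N'‖
      ≤ (n:ℝ) * t ^ (n-1) / n.factorial + (S + |μ 0|) * t ^ n / n.factorial := by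
    calc ‖(A * e + P * e') * N + P * e * N'‖
        ≤ ‖(A * e + P * e') * N‖ + ‖P * e * N'‖ :=
          norm_add_le _ _
      _ ≤ (‖A * e‖ + ‖P * e'‖) * ‖N‖
            + ‖P * e‖ * ‖N'‖ := by
          rw [norm_mul, norm_mul]
          gcongr
          exact norm_add_le _ _
      _ = ((n:ℝ) * t ^ (n-1) + t ^ n * |μ 0|) * ‖N‖ + t ^ n * ‖N'‖ := by
          simp only [norm_mul, habsA, habse, habsP, habse']
          ring
      _ ≤ ((n:ℝ) * t ^ (n-1) + t ^ n * |μ 0|) * (1 / n.factorial) + t ^ n * (S / n.factorial) := by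
          gcongr
      _ = (n:ℝ) * t ^ (n-1) / n.factorial + (S + |μ 0|) * t ^ n / n.factorial := by
          field_simp
          ring
  refine key.trans (le_of_eq ?_)
  rw [hSS, show n+1-2 = n-1 by omega, show n+1-1 = n by omega]
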